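/- The differential of the sixth iterate of the trace map T(x,y,z) = (2xy − z, x, y) at the point (0,0,a) equals the matrix [[16a⁴ − 4a² + 1, 8a³, 0], [8a³, 4a² + 1, 0], [0, 0, 1]]. -/

import Mathlib

open Matrix

def traceMap (v : Fin 3 → ℝ) : Fin 3 → ℝ :=
  ![2 * v 0 * v 1 - v 2, v 0, v 1]

lemma key (p : Fin 3 → ℝ) :
    HasFDerivAt traceMap
      (LinearMap.toContinuousLinearMap
        (Matrix.mulVecLin !![2 * p 1, 2 * p 0, -1; 1, 0, 0; 0, 1, 0])) p := by
  apply hasFDerivAt_pi''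
  intro i
  have p0 : HasFDerivAt (𝕜 := ℝ) (fun v : Fin 3 → ℝ => v 0) (ContinuousLinearMap.proj 0) p :=
    hasFDerivAt_apply 0 p
  have p1 : HasFDerivAt (𝕜 := ℝ) (fun v : Fin 3 → ℝ => v 1) (ContinuousLinearMap.proj 1) p :=
    hasFDerivAt_apply 1 p
  have p2 : HasFDerivAt (𝕜 := ℝ) (fun v : Fin 3 → ℝ => v 2) (ContinuousLinearMap.proj 2) p :=
    hasFDerivAt_apply 2 p
  fin_cases i
  · have h := ((p0.const_mul 2).mul p1).sub p2
    refine h.congr_fderiv ?_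
    ext w
    simp [Matrix.mulVecLin_apply, Matrix.mulVec, dotProduct, Fin.sum_univ_three,
      Matrix.vecHead, Matrix.vecTail]
    ring
  · refine p0.congr_fderiv ?_
    ext w
    simp [Matrix.mulVecLin_apply, Matrix.mulVec, dotProduct, Fin.sum_univ_three,
      Matrix.vecHead, Matrix.vecTail]
  · refine p1.congr_fderiv ?_
    ext w
    simp [Matrix.mulVecLin_apply, Matrix.mulVec, dotProduct, Fin.sum_univ_three,
      Matrix.vecHead, Matrix.vecTail]

theorem jacobian_sixth_iterate (a : ℝ) :
    HasFDerivAt (traceMap^[6])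
      (LinearMap.toContinuousLinearMap
        (Matrix.mulVecLin
          !![16 * a ^ 4 - 4 * a ^ 2 + 1, 8 * a ^ 3, 0;
             8 * a ^ 3, 4 * a ^ 2 + 1, 0;
             0, 0, 1]))
      ![0, 0, a] := by
  have e0 : traceMap ![0, 0, a] = ![-a, 0, 0] := by
    funext i; fin_cases i <;> simp [traceMap]
  have e1 : traceMap ![-a, 0, 0] = ![0, -a, 0] := by
    funext i; fin_cases i <;> simp [traceMap]
  have e2 : traceMap ![0, -a, 0] = ![0, 0, -a] := by
    funext i; fin_cases i <;> simp [traceMap]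
  have e3 : traceMap ![0, 0, -a] = ![a, 0, 0] := by
    funext i; fin_cases i <;> simp [traceMap]
  have e4 : traceMap ![a, 0, 0] = ![0, a, 0] := by
    funext i; fin_cases i <;> simp [traceMap]
  have h0 := key ![0, 0, a]
  have h1 : HasFDerivAt traceMap
      (LinearMap.toContinuousLinearMap
        (Matrix.mulVecLin !![2 * (![(-a),0,0] : Fin 3 → ℝ) 1, 2 * (![(-a),0,0] : Fin 3 → ℝ) 0, -1; 1, 0, 0; 0, 1, 0]))
      (traceMap ![0, 0, a]) := by rw [e0]; exact key _
  have H1 := h1.comp _ h0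
  have h2 : HasFDerivAt traceMap
      (LinearMap.toContinuousLinearMap
        (Matrix.mulVecLin !![2 * (![0,(-a),0] : Fin 3 → ℝ) 1, 2 * (![0,(-a),0] : Fin 3 → ℝ) 0, -1; 1, 0, 0; 0, 1, 0]))
      ((traceMap ∘ traceMap) ![0, 0, a]) := by
    simp only [Function.comp_apply, e0, e1]; exact key _
  have H2 := h2.comp _ H1
  have h3 : HasFDerivAt traceMap
      (LinearMap.toContinuousLinearMap
        (Matrix.mulVecLin !![2 * (![0,0,(-a)] : Fin 3 → ℝ) 1, 2 * (![0,0,(-a)] : Fin 3 → ℝ) 0, -1; 1, 0, 0; 0, 1, 0]))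
      ((traceMap ∘ traceMap ∘ traceMap) ![0, 0, a]) := by
    simp only [Function.comp_apply, e0, e1, e2]; exact key _
  have H3 := h3.comp _ H2
  have h4 : HasFDerivAt traceMap
      (LinearMap.toContinuousLinearMap
        (Matrix.mulVecLin !![2 * (![a,0,0] : Fin 3 → ℝ) 1, 2 * (![a,0,0] : Fin 3 → ℝ) 0, -1; 1, 0, 0; 0, 1, 0]))
      ((traceMap ∘ traceMap ∘ traceMap ∘ traceMap) ![0, 0, a]) := by
    simp only [Function.comp_apply, e0, e1, e2, e3]; exact key _
  have H4 := h4.comp _ H3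
  have h5 : HasFDerivAt traceMap
      (LinearMap.toContinuousLinearMap
        (Matrix.mulVecLin !![2 * (![0,a,0] : Fin 3 → ℝ) 1, 2 * (![0,a,0] : Fin 3 → ℝ) 0, -1; 1, 0, 0; 0, 1, 0]))
      ((traceMap ∘ traceMap ∘ traceMap ∘ traceMap ∘ traceMap) ![0, 0, a]) := by
    simp only [Function.comp_apply, e0, e1, e2, e3, e4]; exact key _
  have H5 := h5.comp _ H4
  have hfun : (traceMap^[6]) =
      traceMap ∘ traceMap ∘ traceMap ∘ traceMap ∘ traceMap ∘ traceMap := by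
    funext v; rfl
  rw [hfun]
  refine H5.congr_fderiv ?_
  ext w i
  fin_cases i <;>
    simp [Matrix.mulVecLin_apply, Matrix.mulVec, dotProduct, Fin.sum_univ_three,
      Matrix.vecHead, Matrix.vecTail] <;> ring
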